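/- Let (X, μ) and (Y, ν) be σ-finite measure spaces, let q ∈ [2,∞) be real, and let K be a positive integer. Let f₁, …, f_K ∈ L²(X) ∩ L^q(X) and suppose A ≥ 0 is such that for every vector c = (c₁,…,c_K) of complex numbers, ‖∑_{k=1}^K c_k f_k‖_{L^q(X)} ≤ A·(∑_{k=1}^K |c_k|²)^{1/2}. Then for all g₁, …, g_K ∈ L^q(Y), the function F(x,y) = ∑_{k=1}^K f_k(x)·g_k(y) satisfies ‖F‖_{L^q(X×Y, μ⊗ν)} ≤ A·(∑_{k=1}^K ‖g_k‖_{L^q(Y)}²)^{1/2}. -/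

import Mathlib

open MeasureTheory
open scoped ENNReal NNReal

/-- Minkowski-inequality step: if the `f_k` satisfy an
`ℓ² → L^q(X)` bound with constant `A`, then for any `g_k ∈ L^q(Y)` the
function `F(x,y) = ∑ f_k(x)·g_k(y)` satisfies
`‖F‖_{L^q(X×Y)} ≤ A·(∑ ‖g_k‖_{L^q(Y)}²)^{1/2}`. -/
theorem stmt_6 {X Y : Type*} [MeasurableSpace X] [MeasurableSpace Y]
    (μ : Measure X) (ν : Measure Y) [SigmaFinite μ] [SigmaFinite ν]
    (q : ℝ) (hq : 2 ≤ q) (K : ℕ) (hK : 0 < K)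
    (f : Fin K → X → ℂ)
    (hf2 : ∀ k, MemLp (f k) 2 μ)
    (hfq : ∀ k, MemLp (f k) (ENNReal.ofReal q) μ)
    (A : ℝ) (hA : 0 ≤ A)
    (hbd : ∀ c : Fin K → ℂ,
      eLpNorm (fun x => ∑ k, c k * f k x) (ENNReal.ofReal q) μ ≤
        ENNReal.ofReal (A * Real.sqrt (∑ k, ‖c k‖ ^ 2)))
    (g : Fin K → Y → ℂ) (hg : ∀ k, MemLp (g k) (ENNReal.ofReal q) ν) :
    eLpNorm (fun p : X × Y => ∑ k, f k p.1 * g k p.2) (ENNReal.ofReal q)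
        (μ.prod ν) ≤
      ENNReal.ofReal (A * Real.sqrt
        (∑ k, ((eLpNorm (g k) (ENNReal.ofReal q) ν).toReal) ^ 2)) := by
  have hq0 : (0:ℝ) < q := by linarith
  set Q := ENNReal.ofReal q with hQdef
  have hQ0 : Q ≠ 0 := by
    simp only [hQdef, Ne, ENNReal.ofReal_eq_zero, not_le]; linarith
  have hQtop : Q ≠ ∞ := ENNReal.ofReal_ne_top
  have hQtr : Q.toReal = q := ENNReal.toReal_ofReal hq0.le
  -- the exponent r = q/2 and R = ofReal r
  set r : ℝ := q / 2 with hrdef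
  have hr1 : (1:ℝ) ≤ r := by rw [hrdef]; linarith
  have hr0 : (0:ℝ) < r := by linarith
  set R := ENNReal.ofReal r with hRdef
  have hR0 : R ≠ 0 := by
    simp only [hRdef, Ne, ENNReal.ofReal_eq_zero, not_le]; linarith
  have hRtop : R ≠ ∞ := ENNReal.ofReal_ne_top
  have hRtr : R.toReal = r := ENNReal.toReal_ofReal hr0.le
  have hR1 : (1:ℝ≥0∞) ≤ R := by
    rw [hRdef, ← ENNReal.ofReal_one]
    exact ENNReal.ofReal_le_ofReal hr1
  -- measurability
  have hfm : ∀ k, AEStronglyMeasurable (f k) μ := fun k => (hfq k).1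
  have hgm : ∀ k, AEStronglyMeasurable (g k) ν := fun k => (hg k).1
  have hF : AEStronglyMeasurable (fun p : X × Y => ∑ k, f k p.1 * g k p.2)
      (μ.prod ν) :=
    Finset.aestronglyMeasurable_fun_sum _ fun k _ => ((hfm k).comp_fst.fun_mul ((hgm k).comp_snd))
  -- abbreviation for the L^q norms of g
  set E : Fin K → ℝ≥0∞ := fun k => eLpNorm (g k) Q ν with hE
  have hEfin : ∀ k, E k ≠ ∞ := fun k => (hg k).2.ne
  -- coercion lemma
  have hcoe : ∀ (y : Y), ENNReal.ofReal (∑ k, ‖g k y‖ ^ 2) =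
      ∑ k, (‖g k y‖₊ : ℝ≥0∞) ^ 2 := by
    intro y
    rw [ENNReal.ofReal_sum_of_nonneg (fun k _ => sq_nonneg _)]
    exact Finset.sum_congr rfl fun k _ => by
      rw [ENNReal.ofReal_pow (norm_nonneg _), ofReal_norm_eq_enorm, enorm_eq_nnnorm]
  -- rewrite the RHS
  have hRHS : ENNReal.ofReal (A * Real.sqrt (∑ k, (E k).toReal ^ 2)) =
      ENNReal.ofReal A * (∑ k, E k ^ 2) ^ (1/2 : ℝ) := by
    have hS : (0:ℝ) ≤ ∑ k, (E k).toReal ^ 2 :=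
      Finset.sum_nonneg fun k _ => sq_nonneg _
    rw [ENNReal.ofReal_mul hA, Real.sqrt_eq_rpow,
      ← ENNReal.ofReal_rpow_of_nonneg hS (by norm_num)]
    congr 2
    rw [ENNReal.ofReal_sum_of_nonneg (fun k _ => sq_nonneg _)]
    exact Finset.sum_congr rfl fun k _ => by
      rw [ENNReal.ofReal_pow ENNReal.toReal_nonneg, ENNReal.ofReal_toReal (hEfin k)]
  -- pointwise-in-y bound on the inner integral
  have hbd' : ∀ y : Y, (∫⁻ x, (‖∑ k, f k x * g k y‖₊ : ℝ≥0∞) ^ q ∂μ) ≤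
      ENNReal.ofReal A ^ q * (∑ k, (‖g k y‖₊ : ℝ≥0∞) ^ 2) ^ r := by
    intro y
    have hcomm : (fun x => ∑ k, g k y * f k x) = fun x => ∑ k, f k x * g k y := by
      funext x; exact Finset.sum_congr rfl fun k _ => mul_comm _ _
    have h1 : (∫⁻ x, (‖∑ k, f k x * g k y‖₊ : ℝ≥0∞) ^ q ∂μ) =
        eLpNorm (fun x => ∑ k, g k y * f k x) Q μ ^ q := by
      rw [hcomm, eLpNorm_eq_lintegral_rpow_enorm_toReal hQ0 hQtop, hQtr,
        ← ENNReal.rpow_mul, one_div, inv_mul_cancel₀ hq0.ne', ENNReal.rpow_one]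
      simp only [enorm_eq_nnnorm]
    rw [h1]
    calc eLpNorm (fun x => ∑ k, g k y * f k x) Q μ ^ q
        ≤ ENNReal.ofReal (A * Real.sqrt (∑ k, ‖g k y‖ ^ 2)) ^ q :=
          ENNReal.rpow_le_rpow (hbd fun k => g k y) hq0.le
      _ = ENNReal.ofReal A ^ q * (∑ k, (‖g k y‖₊ : ℝ≥0∞) ^ 2) ^ r := by
          have hS : (0:ℝ) ≤ ∑ k, ‖g k y‖ ^ 2 :=
            Finset.sum_nonneg fun k _ => sq_nonneg _
          have he : (1/2 : ℝ) * q = r := by rw [hrdef]; ring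
          rw [ENNReal.ofReal_mul hA, ENNReal.mul_rpow_of_nonneg _ _ hq0.le,
            Real.sqrt_eq_rpow, ← ENNReal.ofReal_rpow_of_nonneg hS (by norm_num),
            hcoe y, ← ENNReal.rpow_mul, he]
  -- the functions |g_k|^2 and their L^r triangle inequality
  set φ : Fin K → Y → ℝ := fun k y => ‖g k y‖ ^ 2 with hφ
  have hφm : ∀ k, AEStronglyMeasurable (φ k) ν := fun k => (hgm k).norm.pow 2
  have hφcoe : ∀ k (y : Y), (‖φ k y‖₊ : ℝ≥0∞) = (‖g k y‖₊ : ℝ≥0∞) ^ 2 := by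
    intro k y
    rw [← enorm_eq_nnnorm, ← ofReal_norm_eq_enorm, hφ]
    simp only [Real.norm_eq_abs, _root_.abs_pow, abs_norm]
    rw [ENNReal.ofReal_pow (norm_nonneg _), ofReal_norm_eq_enorm, enorm_eq_nnnorm]
  -- T is the integral appearing after the pointwise bound
  set T : ℝ≥0∞ := ∫⁻ y, (∑ k, (‖g k y‖₊ : ℝ≥0∞) ^ 2) ^ r ∂ν with hT
  have hsumφ : eLpNorm (∑ k, φ k) R ν = T ^ (1/r) := by
    rw [eLpNorm_eq_lintegral_rpow_enorm_toReal hR0 hRtop, hRtr, hT]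
    congr 1
    refine lintegral_congr fun y => ?_
    congr 1
    rw [← ofReal_norm_eq_enorm, Finset.sum_apply,
      Real.norm_of_nonneg (Finset.sum_nonneg fun k _ => sq_nonneg _)]
    exact hcoe y
  have hφnorm : ∀ k, eLpNorm (φ k) R ν = E k ^ 2 := by
    intro k
    show eLpNorm (φ k) R ν = (eLpNorm (g k) Q ν) ^ 2
    rw [eLpNorm_eq_lintegral_rpow_enorm_toReal hR0 hRtop, hRtr]
    rw [eLpNorm_eq_lintegral_rpow_enorm_toReal hQ0 hQtop, hQtr]
    have h2r : ∀ (y : Y), (‖φ k y‖₊ : ℝ≥0∞) ^ r = (‖g k y‖₊ : ℝ≥0∞) ^ q := by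
      intro y
      have he : ((2:ℕ) : ℝ) * r = q := by rw [hrdef]; push_cast; ring
      rw [hφcoe k y, ← ENNReal.rpow_natCast _ 2, ← ENNReal.rpow_mul, he]
    have he2 : (1/q : ℝ) * ((2:ℕ) : ℝ) = 1/r := by
      rw [hrdef]; push_cast; field_simp
    simp only [enorm_eq_nnnorm]
    rw [lintegral_congr h2r, ← ENNReal.rpow_natCast _ 2, ← ENNReal.rpow_mul, he2]
  have hTle : T ≤ (∑ k, E k ^ 2) ^ r := by
    have htri : eLpNorm (∑ k, φ k) R ν ≤ ∑ k, eLpNorm (φ k) R ν :=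
      eLpNorm_sum_le (fun k _ => hφm k) hR1
    have h2 : T = (eLpNorm (∑ k, φ k) R ν) ^ r := by
      rw [hsumφ, ← ENNReal.rpow_mul, one_div, inv_mul_cancel₀ hr0.ne',
        ENNReal.rpow_one]
    rw [h2]
    refine ENNReal.rpow_le_rpow ?_ hr0.le
    calc eLpNorm (∑ k, φ k) R ν ≤ ∑ k, eLpNorm (φ k) R ν := htri
      _ = ∑ k, E k ^ 2 := Finset.sum_congr rfl fun k _ => hφnorm k
  -- assemble everything
  rw [hRHS, eLpNorm_eq_lintegral_rpow_enorm_toReal hQ0 hQtop, hQtr]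
  have hmeas : AEMeasurable
      (fun p : X × Y => (‖∑ k, f k p.1 * g k p.2‖₊ : ℝ≥0∞) ^ q) (μ.prod ν) :=
    by simpa only [enorm_eq_nnnorm] using hF.enorm.pow_const q
  simp only [enorm_eq_nnnorm]
  rw [lintegral_prod_symm _ hmeas]
  have hAfin : ENNReal.ofReal A ^ q ≠ ∞ :=
    ENNReal.rpow_ne_top_of_nonneg hq0.le ENNReal.ofReal_ne_top
  calc (∫⁻ y, ∫⁻ x, (‖∑ k, f k x * g k y‖₊ : ℝ≥0∞) ^ q ∂μ ∂ν) ^ (1/q)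
      ≤ (∫⁻ y, ENNReal.ofReal A ^ q * (∑ k, (‖g k y‖₊ : ℝ≥0∞) ^ 2) ^ r ∂ν) ^ (1/q) :=
        ENNReal.rpow_le_rpow (lintegral_mono hbd') (by positivity)
    _ = ENNReal.ofReal A * T ^ (1/q) := by
        rw [lintegral_const_mul' _ _ hAfin, ← hT,
          ENNReal.mul_rpow_of_nonneg _ _ (by positivity),
          ← ENNReal.rpow_mul, mul_one_div, div_self hq0.ne', ENNReal.rpow_one]
    _ ≤ ENNReal.ofReal A * ((∑ k, E k ^ 2) ^ r) ^ (1/q) :=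
        mul_le_mul' le_rfl (ENNReal.rpow_le_rpow hTle (by positivity))
    _ = ENNReal.ofReal A * (∑ k, E k ^ 2) ^ (1/2 : ℝ) := by
        have he : r * (1/q) = 1/2 := by rw [hrdef]; field_simp
        rw [← ENNReal.rpow_mul, he]
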